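/- Any closed orbit of the system x'=x(K-x)(x-A)-p(x)y, y'=y(p(x)-d) in the positive quadrant lies entirely in the strip {(x,y): max{0,A} ≤ x ≤ min{β,K}, y>0}, where β is the larger root of adx²+(bd-1)x+d=0 (taken as +∞ if no real roots). -/

import Mathlib

private theorem stmt_13_aux (a b K A d T : ℝ) (ha : 0 < a) (hb : -2 * Real.sqrt a < b)
    (hK : 0 < K) (hA2 : A < K) (hd : 0 < d) (hT : 0 < T)
    (X Y : ℝ → ℝ)
    (hpX : ∀ t, X (t + T) = X t)
    (hXpos : ∀ t, 0 < X t) (hYpos : ∀ t, 0 < Y t)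
    (hXd : ∀ t, HasDerivAt X
      (X t * (K - X t) * (X t - A) - X t / (a * X t ^ 2 + b * X t + 1) * Y t) t)
    (hYd : ∀ t, HasDerivAt Y (Y t * (X t / (a * X t ^ 2 + b * X t + 1) - d)) t) :
    ∀ t, A ≤ X t ∧ X t ≤ K ∧
      ((b * d - 1) ^ 2 - 4 * a * d ^ 2 ≥ 0 →
        X t ≤ (1 - b * d + Real.sqrt ((b * d - 1) ^ 2 - 4 * a * d ^ 2)) / (2 * a * d)) := by
  have hden : ∀ x : ℝ, 0 < x → 0 < a * x ^ 2 + b * x + 1 := by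
    intro x hx
    nlinarith [sq_nonneg (Real.sqrt a * x - 1), Real.sq_sqrt ha.le,
      mul_pos (show (0:ℝ) < b + 2 * Real.sqrt a by linarith) hx]
  have hDpos : ∀ t, 0 < a * X t ^ 2 + b * X t + 1 := fun t => hden _ (hXpos t)
  set g : ℝ → ℝ := fun t =>
    X t * (K - X t) * (X t - A) - X t / (a * X t ^ 2 + b * X t + 1) * Y t with hgdef
  have hXd' : ∀ t, HasDerivAt X (g t) t := hXd
  have hcont : Continuous X := continuous_iff_continuousAt.mpr fun t => (hXd' t).continuousAt
  have hper : ∀ s, ∃ s' ∈ Set.Icc (0:ℝ) T, X s' = X s := by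
    intro s
    refine ⟨s - ⌊s / T⌋ * T, ⟨Int.sub_floor_div_mul_nonneg s hT,
      (Int.sub_floor_div_mul_lt s hT).le⟩, ?_⟩
    exact Function.Periodic.sub_int_mul_eq hpX ⌊s / T⌋
  obtain ⟨t₁, ht₁mem, hmax'⟩ := isCompact_Icc.exists_isMaxOn
    (Set.nonempty_Icc.mpr hT.le) hcont.continuousOn
  have hmax : ∀ s, X s ≤ X t₁ := by
    intro s
    obtain ⟨s', hs', he⟩ := hper s
    calc X s = X s' := he.symm
    _ ≤ X t₁ := hmax' hs'
  have hg1 : g t₁ = 0 := by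
    have hloc : IsLocalMax X t₁ := Filter.Eventually.of_forall hmax
    exact hloc.hasDerivAt_eq_zero (hXd' t₁)
  -- K bound at the maximum point
  have hK1 : X t₁ < K := by
    by_contra h
    push_neg at h
    have h1 : X t₁ * (K - X t₁) * (X t₁ - A)
        - X t₁ / (a * X t₁ ^ 2 + b * X t₁ + 1) * Y t₁ = 0 := hg1
    have h2 : 0 < X t₁ / (a * X t₁ ^ 2 + b * X t₁ + 1) * Y t₁ :=
      mul_pos (div_pos (hXpos t₁) (hDpos t₁)) (hYpos t₁)
    nlinarith [mul_pos (hXpos t₁) (show (0:ℝ) < X t₁ - A by linarith)]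
  -- A bound
  have hA0 : ∀ s, A ≤ X s := by
    rcases le_or_gt A 0 with hA | hA
    · exact fun s => hA.trans (hXpos s).le
    · obtain ⟨t₀, ht₀mem, hmin'⟩ := isCompact_Icc.exists_isMinOn
        (Set.nonempty_Icc.mpr hT.le) hcont.continuousOn
      have hmin : ∀ s, X t₀ ≤ X s := by
        intro s
        obtain ⟨s', hs', he⟩ := hper s
        calc X t₀ ≤ X s' := hmin' hs'
        _ = X s := he
      have hg0 : g t₀ = 0 := by
        have hloc : IsLocalMin X t₀ := Filter.Eventually.of_forall hmin
        exact hloc.hasDerivAt_eq_zero (hXd' t₀)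
      have hlt : A < X t₀ := by
        by_contra hcon
        push_neg at hcon
        have h1 : X t₀ * (K - X t₀) * (X t₀ - A)
            - X t₀ / (a * X t₀ ^ 2 + b * X t₀ + 1) * Y t₀ = 0 := hg0
        have h2 : 0 < X t₀ / (a * X t₀ ^ 2 + b * X t₀ + 1) * Y t₀ :=
          mul_pos (div_pos (hXpos t₀) (hDpos t₀)) (hYpos t₀)
        nlinarith [mul_pos (hXpos t₀) (show (0:ℝ) < K - X t₀ by linarith)]
      exact fun s => hlt.le.trans (hmin s)
  -- beta bound
  have hbeta : (b * d - 1) ^ 2 - 4 * a * d ^ 2 ≥ 0 →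
      X t₁ ≤ (1 - b * d + Real.sqrt ((b * d - 1) ^ 2 - 4 * a * d ^ 2)) / (2 * a * d) := by
    intro hΔ
    by_contra hcon
    push_neg at hcon
    have hm0 : 0 < X t₁ := hXpos t₁
    have hDm : 0 < a * X t₁ ^ 2 + b * X t₁ + 1 := hDpos t₁
    have had : 0 < 2 * a * d := by positivity
    have hmlt : 1 - b * d + Real.sqrt ((b * d - 1) ^ 2 - 4 * a * d ^ 2) < 2 * a * d * X t₁ := by
      rw [div_lt_iff₀ had] at hcon; linarith
    have hsq : Real.sqrt ((b * d - 1) ^ 2 - 4 * a * d ^ 2) ^ 2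
        = (b * d - 1) ^ 2 - 4 * a * d ^ 2 := Real.sq_sqrt hΔ
    have hsn : 0 ≤ Real.sqrt ((b * d - 1) ^ 2 - 4 * a * d ^ 2) :=
      Real.sqrt_nonneg _
    have hq : 0 < a * d * X t₁ ^ 2 + (b * d - 1) * X t₁ + d := by
      nlinarith [mul_pos ha hd,
        mul_pos (show (0:ℝ) < 2 * a * d * X t₁ + b * d - 1
            - Real.sqrt ((b * d - 1) ^ 2 - 4 * a * d ^ 2) by linarith)
          (show (0:ℝ) < 2 * a * d * X t₁ + b * d - 1
            + Real.sqrt ((b * d - 1) ^ 2 - 4 * a * d ^ 2) by linarith)]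
    have hpd : X t₁ / (a * X t₁ ^ 2 + b * X t₁ + 1) - d < 0 := by
      rw [sub_neg, div_lt_iff₀ hDm]; nlinarith
    have hw : Y t₁ * (X t₁ / (a * X t₁ ^ 2 + b * X t₁ + 1) - d) < 0 :=
      mul_neg_of_pos_of_neg (hYpos t₁) hpd
    have hX1 : HasDerivAt X 0 t₁ := by
      have := hXd' t₁; rwa [hg1] at this
    have hY1 := hYd t₁
    have h1 := (hX1.mul (hX1.const_sub K)).mul (hX1.sub_const A)
    have h2 := (((hX1.pow 2).const_mul a).add (hX1.const_mul b)).add_const 1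
    have h3 := hX1.div h2 (ne_of_gt hDm)
    have h4 := h1.sub (h3.mul hY1)
    have hgd : HasDerivAt g
        (X t₁ / (a * X t₁ ^ 2 + b * X t₁ + 1)
          * (-(Y t₁ * (X t₁ / (a * X t₁ ^ 2 + b * X t₁ + 1) - d)))) t₁ := by
      rw [hgdef]
      convert h4 using 1
      case e'_9 =>
        simp only [Pi.mul_apply, Pi.div_apply, Pi.pow_apply, Pi.add_apply]
        ring
      all_goals rfl
    have hcpos : 0 < X t₁ / (a * X t₁ ^ 2 + b * X t₁ + 1)
        * (-(Y t₁ * (X t₁ / (a * X t₁ ^ 2 + b * X t₁ + 1) - d))) :=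
      mul_pos (div_pos hm0 hDm) (neg_pos.mpr hw)
    have hslope := (hasDerivAt_iff_tendsto_slope.mp hgd).mono_left
      (nhdsWithin_mono t₁ (fun x (hx : x ∈ Set.Ioi t₁) => Set.mem_compl_singleton_iff.mpr (Set.mem_Ioi.mp hx).ne'))
    have hev : ∀ᶠ s in nhdsWithin t₁ (Set.Ioi t₁), 0 < slope g t₁ s :=
      hslope.eventually (eventually_gt_nhds hcpos)
    obtain ⟨u, hu, hsub⟩ := mem_nhdsGT_iff_exists_Ioo_subset.mp hev
    have hu' : t₁ < u := hu
    have hgpos : ∀ s ∈ Set.Ioo t₁ u, 0 < g s := by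
      intro s hs
      have h5 := hsub hs
      rw [Set.mem_setOf_eq, slope_def_field, hg1, sub_zero] at h5
      have h6 := mul_pos h5 (sub_pos.mpr hs.1)
      rwa [div_mul_cancel₀ _ (sub_pos.mpr hs.1).ne'] at h6
    have ht₂1 : t₁ < (t₁ + u) / 2 := by linarith
    have ht₂2 : (t₁ + u) / 2 < u := by linarith
    have hmono : StrictMonoOn X (Set.Icc t₁ ((t₁ + u) / 2)) := by
      apply strictMonoOn_of_deriv_pos (convex_Icc _ _) hcont.continuousOn
      intro s hs
      rw [interior_Icc] at hs
      rw [(hXd' s).deriv]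
      exact hgpos s ⟨hs.1, hs.2.trans ht₂2⟩
    have hlt : X t₁ < X ((t₁ + u) / 2) :=
      hmono (Set.left_mem_Icc.mpr ht₂1.le) (Set.right_mem_Icc.mpr ht₂1.le) ht₂1
    exact absurd (hmax ((t₁ + u) / 2)) (not_le.mpr hlt)
  intro t
  exact ⟨hA0 t, (hmax t).trans hK1.le, fun h => (hmax t).trans (hbeta h)⟩

/-- Any closed orbit of `x' = x(K-x)(x-A) - p x · y`, `y' = y(p x - d)` in the positive
quadrant lies entirely in the strip `{(x,y) : max 0 A ≤ x ≤ min β K, y > 0}`, where `β`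
is the larger root of `a d x² + (b d - 1) x + d = 0` (taken as `+∞` if no real roots). -/
theorem stmt_13 (a b K A d : ℝ) (ha : 0 < a) (hb : -2 * Real.sqrt a < b)
    (hK : 0 < K) (hA1 : -K < A) (hA2 : A < K) (hd : 0 < d)
    (p : ℝ → ℝ) (hp : ∀ x, p x = x / (a * x ^ 2 + b * x + 1))
    (γ : ℝ → ℝ × ℝ) (T : ℝ) (hT : 0 < T)
    (hperiodic : ∀ t, γ (t + T) = γ t)
    (hnonconst : ∃ t₁ t₂, γ t₁ ≠ γ t₂)
    (hpos : ∀ t, 0 < (γ t).1 ∧ 0 < (γ t).2)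
    (hode : ∀ t, HasDerivAt γ
      ((γ t).1 * (K - (γ t).1) * ((γ t).1 - A) - p (γ t).1 * (γ t).2,
       (γ t).2 * (p (γ t).1 - d)) t) :
    ∀ t, max 0 A ≤ (γ t).1 ∧ (γ t).1 ≤ K ∧ 0 < (γ t).2 ∧
      ((b * d - 1) ^ 2 - 4 * a * d ^ 2 ≥ 0 →
        (γ t).1 ≤ (1 - b * d + Real.sqrt ((b * d - 1) ^ 2 - 4 * a * d ^ 2)) / (2 * a * d)) := by
  have key := stmt_13_aux a b K A d T ha hb hK hA2 hd hT
    (fun t => (γ t).1) (fun t => (γ t).2)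
    (fun t => congrArg Prod.fst (hperiodic t))
    (fun t => (hpos t).1) (fun t => (hpos t).2)
    (fun t => by
      have h := (hode t).fst
      simp only [hp] at h
      exact h)
    (fun t => by
      have h := (hode t).snd
      simp only [hp] at h
      exact h)
  intro t
  obtain ⟨h1, h2, h3⟩ := key t
  exact ⟨max_le (hpos t).1.le h1, h2, (hpos t).2, h3⟩
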